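/- Let (G,t) be a threshold instance with t(v) ≤ p for every vertex v, let S be a harmless set, and let R, C' ⊆ V(G) be disjoint sets such that: the pads N²_{G−R}[x'] (closed balls of radius 2 around x' in the graph G − R) for x' ∈ C' are pairwise disjoint; every vertex of every pad has a neighbour in R; and |C'| > (p−1)·|R|. Then there exists a centre x' ∈ C' whose pad N²_{G−R}[x'] does not intersect S. -/

import Mathlib

/-- A set `S` is harmless for the threshold instance `(G, t)` if every vertex `v`
has strictly fewer than `t v` neighbours in `S`. -/
def Harmless {V : Type*} [Fintype V] [DecidableEq V] (G : SimpleGraph V)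
    [DecidableRel G.Adj] (t : V → ℕ) (S : Finset V) : Prop :=
  ∀ v : V, (G.neighborFinset v ∩ S).card < t v

/-- The pad of `x`: the set of vertices at distance at most 2 from `x` in the
graph `G − R` (for `x ∉ R`), i.e. the closed ball of radius 2 around `x` in `G − R`. -/
def padSet {V : Type*} (G : SimpleGraph V) (R : Finset V) (x : V) : Set V :=
  {y | y ∉ R ∧ (y = x ∨ G.Adj x y ∨ ∃ z, z ∉ R ∧ G.Adj x z ∧ G.Adj z y)}

/-- If all thresholds are at most `p`, `S` is harmless, the pads of the centres
`C'` (disjoint from `R`) are pairwise disjoint, every pad vertex has a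
neighbour in `R`, and `|C'| > (p-1)·|R|`, then some centre has a pad avoiding `S`. -/
theorem exists_pad_avoiding {V : Type*} [Fintype V] [DecidableEq V]
    (G : SimpleGraph V) [DecidableRel G.Adj] (t : V → ℕ) (p : ℕ)
    (ht : ∀ v, 1 ≤ t v) (htp : ∀ v, t v ≤ p)
    (S R C' : Finset V) (hS : Harmless G t S) (hdisj : Disjoint R C')
    (hpads : ∀ x ∈ C', ∀ y ∈ C', x ≠ y → Disjoint (padSet G R x) (padSet G R y))
    (hdom : ∀ x ∈ C', ∀ y ∈ padSet G R x, ∃ r ∈ R, G.Adj y r)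
    (hcard : (p - 1) * R.card < C'.card) :
    ∃ x' ∈ C', padSet G R x' ∩ ↑S = ∅ := by
  by_contra h
  push_neg at h
  -- choose a witness `s x ∈ padSet G R x ∩ S` for each `x ∈ C'`
  have hs : ∀ x ∈ C', ∃ y, y ∈ padSet G R x ∧ y ∈ S := by
    intro x hx
    rcases h x hx with ⟨y, hy⟩
    exact ⟨y, hy.1, hy.2⟩
  classical
  choose s hsp hsS using hs
  -- choose a neighbour `r x ∈ R` of `s x`
  have hr : ∀ x (hx : x ∈ C'), ∃ r ∈ R, G.Adj (s x hx) r :=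
    fun x hx => hdom x hx _ (hsp x hx)
  choose r hrR hradj using hr
  -- package into functions on V using the membership proof irrelevantly
  -- count via fibers of x ↦ r x
  set f : V → V := fun x => if hx : x ∈ C' then r x hx else x with hf
  have key : C'.card ≤ (p - 1) * R.card := by
    apply Finset.card_le_mul_card_image_of_maps_to (t := R) (f := f)
    · intro a ha
      simp only [hf, dif_pos ha]
      exact hrR a ha
    · intro b hb
      -- fiber over b injects (via s) into neighborFinset b ∩ S
      have : ({a ∈ C' | f a = b} : Finset V).card ≤
          (G.neighborFinset b ∩ S).card := by
        apply Finset.card_le_card_of_injOn (fun a => if ha : a ∈ C' then s a ha else a)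
        · intro a ha
          simp only [Finset.mem_coe, Finset.mem_filter] at ha
          obtain ⟨haC, hab⟩ := ha
          simp only [dif_pos haC]
          simp only [hf, dif_pos haC] at hab
          subst hab
          exact Finset.mem_inter.mpr ⟨by
            rw [SimpleGraph.mem_neighborFinset]
            exact (hradj a haC).symm, hsS a haC⟩
        · intro a ha a' ha' heq
          simp only [Finset.coe_filter, Set.mem_setOf_eq] at ha ha'
          simp only [dif_pos ha.1, dif_pos ha'.1] at heq
          by_contra hne
          have := hpads a ha.1 a' ha'.1 hne
          exact (Set.disjoint_left.mp this (hsp a ha.1))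
            (heq ▸ hsp a' ha'.1)
      calc ({a ∈ C' | f a = b} : Finset V).card
          ≤ (G.neighborFinset b ∩ S).card := this
        _ ≤ t b - 1 := Nat.le_sub_one_of_lt (hS b)
        _ ≤ p - 1 := Nat.sub_le_sub_right (htp b) 1
  exact absurd key (not_le.mpr hcard)
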